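/- arXiv:1310.8149 — 8 statements merged into one kernel-verified Lean document; each statement's English description precedes it below -/
import Mathlib

section
/- Let A be a nonzero matrix over a field 𝕜 indexed by (Fin m × Fin p) rows and (Fin n × Fin q) columns, regarded as an m×n block matrix with p×q blocks. Then there exist an m×n matrix B and a p×q matrix C with A = B ⊗ C if and only if the block vec matrix vec^{(p×q)}(A) has rank 1. -/
open Matrix Kronecker

/-- The block vec matrix of an `mp × nq` matrix `A`, viewed as an `m × n` block matrix
with `p × q` blocks: its entry in row `(i, j)` and column `(k, l)` is `A (i, k) (j, l)`. -/
def blockVec {𝕜 : Type*} {m n p q : ℕ} (A : Matrix (Fin m × Fin p) (Fin n × Fin q) 𝕜) :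
    Matrix (Fin m × Fin n) (Fin p × Fin q) 𝕜 :=
  Matrix.of fun r c => A (r.1, c.1) (r.2, c.2)

lemma vecMulVec_mulVec' {𝕜 : Type*} [CommRing 𝕜] {α β : Type*} [Fintype β]
    (u : α → 𝕜) (v : β → 𝕜) (x : β → 𝕜) :
    (Matrix.vecMulVec u v).mulVec x = (v ⬝ᵥ x) • u := by
  funext i
  simp [Matrix.vecMulVec_apply, Matrix.mulVec, dotProduct, Finset.mul_sum,
    mul_assoc, mul_comm, mul_left_comm]

lemma rank_vecMulVec_eq_one {𝕜 α β : Type*} [Field 𝕜] [Fintype α] [Fintype β] [DecidableEq β]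
    (u : α → 𝕜) (v : β → 𝕜) (hu : u ≠ 0) (hv : v ≠ 0) :
    (Matrix.vecMulVec u v).rank = 1 := by
  have hrange : LinearMap.range (Matrix.vecMulVec u v).mulVecLin = Submodule.span 𝕜 {u} := by
    apply le_antisymm
    · rintro _ ⟨x, rfl⟩
      rw [Matrix.mulVecLin_apply, vecMulVec_mulVec']
      exact Submodule.smul_mem _ _ (Submodule.mem_span_singleton_self u)
    · rw [Submodule.span_singleton_le_iff_mem]
      obtain ⟨j, hj⟩ := Function.ne_iff.mp hv
      have hj' : v j ≠ 0 := hj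
      refine ⟨(v j)⁻¹ • (Pi.single j 1 : β → 𝕜), ?_⟩
      rw [Matrix.mulVecLin_apply, vecMulVec_mulVec']
      have hd : v ⬝ᵥ ((v j)⁻¹ • (Pi.single j 1 : β → 𝕜)) = 1 := by
        simp [dotProduct, Pi.single_apply, mul_ite, mul_comm,
          Finset.sum_ite_eq', inv_mul_cancel₀ hj', mul_inv_cancel₀ hj']
      rw [hd, one_smul]
  rw [Matrix.rank, hrange, finrank_span_singleton hu]

lemma exists_vecMulVec_of_rank_eq_one {𝕜 α β : Type*} [Field 𝕜] [Fintype α] [Fintype β]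
    [DecidableEq β] {M : Matrix α β 𝕜} (h : M.rank = 1) :
    ∃ (u : α → 𝕜) (v : β → 𝕜), M = Matrix.vecMulVec u v := by
  rw [Matrix.rank] at h
  obtain ⟨w, hw, hall⟩ := finrank_eq_one_iff'.mp h
  have hcol : ∀ j, ∃ c : 𝕜, c • (w : α → 𝕜) = M.mulVec (Pi.single j 1) := by
    intro j
    obtain ⟨c, hc⟩ := hall ⟨M.mulVec (Pi.single j 1), ⟨Pi.single j 1, rfl⟩⟩
    exact ⟨c, congrArg Subtype.val hc⟩
  choose v hv using hcol
  refine ⟨(w : α → 𝕜), v, ?_⟩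
  ext i j
  have := congrFun (hv j) i
  have hM : M.mulVec (Pi.single j 1) i = M i j := by
    simp [Matrix.mulVec, dotProduct, Pi.single_apply, mul_ite, Finset.sum_ite_eq']
  rw [hM] at this
  rw [Matrix.vecMulVec_apply, ← this]
  simp [mul_comm]

theorem kronecker_factorization_iff_rank_one {𝕜 : Type*} [Field 𝕜] {m n p q : ℕ}
    (A : Matrix (Fin m × Fin p) (Fin n × Fin q) 𝕜) (hA : A ≠ 0) :
    (∃ (B : Matrix (Fin m) (Fin n) 𝕜) (C : Matrix (Fin p) (Fin q) 𝕜), A = B ⊗ₖ C) ↔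
      (blockVec A).rank = 1 := by
  constructor
  · rintro ⟨B, C, rfl⟩
    have hBV : blockVec (B ⊗ₖ C) =
        Matrix.vecMulVec (fun r : Fin m × Fin n => B r.1 r.2)
          (fun c : Fin p × Fin q => C c.1 c.2) := by
      ext ⟨i, j⟩ ⟨k, l⟩
      simp [blockVec, Matrix.vecMulVec_apply, Matrix.kroneckerMap_apply]
    obtain ⟨⟨i, k⟩, ⟨j, l⟩, hijkl⟩ : ∃ r c, (B ⊗ₖ C) r c ≠ 0 := by
      by_contra hcon
      push_neg at hcon
      exact hA (by ext r c; exact hcon r c)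
    have hB : (fun r : Fin m × Fin n => B r.1 r.2) ≠ 0 := by
      intro h0
      apply hijkl
      have : B i j = 0 := congrFun h0 (i, j)
      simp [Matrix.kroneckerMap_apply, this]
    have hC : (fun c : Fin p × Fin q => C c.1 c.2) ≠ 0 := by
      intro h0
      apply hijkl
      have : C k l = 0 := congrFun h0 (k, l)
      simp [Matrix.kroneckerMap_apply, this]
    rw [hBV]
    exact rank_vecMulVec_eq_one _ _ hB hC
  · intro h
    obtain ⟨u, v, huv⟩ := exists_vecMulVec_of_rank_eq_one h
    refine ⟨Matrix.of fun i j => u (i, j), Matrix.of fun k l => v (k, l), ?_⟩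
    ext ⟨i, k⟩ ⟨j, l⟩
    have := congrFun (congrFun huv (i, j)) (k, l)
    simpa [blockVec, Matrix.vecMulVec_apply, Matrix.kroneckerMap_apply] using this
end

section
/- Let A be a nonzero matrix over a field 𝕜 indexed by (Fin m × Fin m) rows and (Fin n × Fin n) columns, and suppose A = B ⊗ B for some m×n matrix B. Then the block vec matrix vec^{(m×n)}(A) is symmetric (equal to its transpose) and has rank 1. -/
open Matrix Kronecker

lemma aux_rank_pos_of_ne_zero {𝕜 : Type*} [Field 𝕜] {m n : Type*} [Fintype m] [Fintype n]
    [DecidableEq n] (A : Matrix m n 𝕜) (h : A ≠ 0) : 0 < A.rank := by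
  rw [Nat.pos_iff_ne_zero]
  intro h0
  apply h
  rw [Matrix.rank, Submodule.finrank_eq_zero] at h0
  have := LinearMap.range_eq_bot.mp h0
  ext i j
  have h1 := congrFun (congrFun (congrArg DFunLike.coe this) (Pi.single j 1)) i
  simpa [Matrix.mulVecLin, Matrix.mulVec_single] using h1

theorem blockVec_isSymm_and_rank_one_of_kronecker_sq {𝕜 : Type*} [Field 𝕜] {m n : ℕ}
    (A : Matrix (Fin m × Fin m) (Fin n × Fin n) 𝕜) (hA : A ≠ 0)
    (B : Matrix (Fin m) (Fin n) 𝕜) (hAB : A = B ⊗ₖ B) :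
    (blockVec A).IsSymm ∧ (blockVec A).rank = 1 := by
  set v : Fin m × Fin n → 𝕜 := fun p => B p.1 p.2 with hv
  have key : blockVec A = vecMulVec v v := by
    ext ⟨i, j⟩ ⟨k, l⟩
    simp [blockVec, vecMulVec, hAB, kroneckerMap_apply, hv]
  constructor
  · rw [key]
    ext ⟨i, j⟩ ⟨k, l⟩
    simp [vecMulVec, mul_comm]
  · refine le_antisymm ?_ ?_
    · rw [key, vecMulVec_eq Unit]
      calc (replicateCol Unit v * replicateRow Unit v).rank ≤ (replicateCol Unit v).rank := rank_mul_le_left _ _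
        _ ≤ Fintype.card Unit := rank_le_card_width _
        _ = 1 := by simp
    · refine aux_rank_pos_of_ne_zero _ (fun h => hA ?_)
      ext ⟨i, k⟩ ⟨j, l⟩
      exact congrFun (congrFun h (i, j)) (k, l)
end

section
/- Let A be a complex matrix indexed by (Fin m × Fin m) rows and (Fin n × Fin n) columns. If the block vec matrix vec^{(m×n)}(A) is symmetric (equal to its transpose) and has rank 1, then there exists an m×n complex matrix B such that A = B ⊗ B. -/
open Matrix Kronecker

lemma rank_one_outer {ι : Type*} [Fintype ι] [DecidableEq ι] (M : Matrix ι ι ℂ)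
    (h : M.rank = 1) : ∃ u v : ι → ℂ, (∃ i j, u i * v j ≠ 0) ∧ ∀ i j, M i j = u i * v j := by
  rw [Matrix.rank, finrank_eq_one_iff'] at h
  obtain ⟨⟨u, hu⟩, hu0, hspan⟩ := h
  have hcol : ∀ j : ι, ∃ c : ℂ, ∀ i, c * u i = M i j := by
    intro j
    have : M.mulVec (Pi.single j 1) ∈ LinearMap.range M.mulVecLin :=
      ⟨Pi.single j 1, rfl⟩
    obtain ⟨c, hc⟩ := hspan ⟨_, this⟩
    refine ⟨c, fun i => ?_⟩
    have := congrArg (fun w : LinearMap.range M.mulVecLin => (w : ι → ℂ) i) hc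
    simpa [Matrix.mulVec_single, mul_comm] using this
  choose v hv using hcol
  refine ⟨u, v, ?_, fun i j => ((hv j i).symm.trans (mul_comm _ _))⟩
  have hune : u ≠ 0 := by
    intro h0
    apply hu0
    ext
    simp [h0]
  obtain ⟨i, j, hij⟩ : ∃ i j, M i j ≠ 0 := by
    by_contra hcon
    push_neg at hcon
    apply hune
    obtain ⟨x, hx⟩ := hu
    ext i
    rw [← hx]
    simp [Matrix.mulVec, dotProduct]
    exact Finset.sum_eq_zero fun j _ => by simp [hcon i j]
  exact ⟨i, j, by rw [mul_comm, hv j i]; exact hij⟩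

theorem exists_kronecker_sqrt_of_blockVec_isSymm_rank_one {m n : ℕ}
    (A : Matrix (Fin m × Fin m) (Fin n × Fin n) ℂ)
    (hsymm : (blockVec A).IsSymm) (hrank : (blockVec A).rank = 1) :
    ∃ B : Matrix (Fin m) (Fin n) ℂ, A = B ⊗ₖ B := by
  obtain ⟨u, v, ⟨i0, j0, hne⟩, hM⟩ := rank_one_outer _ hrank
  have hv0 : v j0 ≠ 0 := fun h => hne (by simp [h])
  have hsym : ∀ i j, u i * v j = u j * v i := by
    intro i j
    have := congrFun (congrFun hsymm.symm i) j
    simpa [Matrix.transpose_apply, hM] using this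
  set c : ℂ := u j0 / v j0 with hc
  have hu_eq : ∀ i, u i = c * v i := by
    intro i
    rw [hc, div_mul_eq_mul_div, eq_div_iff hv0]
    rw [mul_comm (u i), hsym j0 i]
    ring
  obtain ⟨s, hs⟩ := IsAlgClosed.exists_pow_nat_eq (k := ℂ) c zero_lt_two
  set w : Fin m × Fin n → ℂ := fun p => s * v p with hw
  have key : ∀ p q, blockVec A p q = w p * w q := by
    intro p q
    rw [hM, hu_eq p]
    show c * v p * v q = (s * v p) * (s * v q)
    rw [← hs]
    ring
  refine ⟨Matrix.of fun i j => w (i, j), ?_⟩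
  ext ⟨i, k⟩ ⟨j, l⟩
  have := key (i, j) (k, l)
  simpa [blockVec, Matrix.kroneckerMap_apply] using this
end

section
/- Let A be a real matrix indexed by (Fin m × Fin m) rows and (Fin n × Fin n) columns such that the block vec matrix vec^{(m×n)}(A) is symmetric and has rank 1. Then there exists a real m×n matrix B with A = B ⊗ B if and only if the trace of vec^{(m×n)}(A) is strictly positive. -/
open Matrix Kronecker

/-- A square real matrix of rank one factors as `M i j = c j * v i` with `v ≠ 0`. -/
lemma rank_one_factor {ι : Type*} [Fintype ι] [DecidableEq ι] (M : Matrix ι ι ℝ)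
    (h : M.rank = 1) : ∃ (v c : ι → ℝ), v ≠ 0 ∧ ∀ i j, M i j = c j * v i := by
  rw [Matrix.rank] at h
  obtain ⟨⟨v, hvmem⟩, hv0, hv⟩ := finrank_eq_one_iff'.mp h
  have hvne : v ≠ 0 := by
    intro hv'
    exact hv0 (Subtype.ext hv')
  have key : ∀ j, ∃ c : ℝ, ∀ i, M i j = c * v i := by
    intro j
    obtain ⟨c, hc⟩ := hv ⟨M.mulVec (Pi.single j 1), LinearMap.mem_range_self _ _⟩
    refine ⟨c, fun i => ?_⟩
    have h1 : c • v = M.mulVec (Pi.single j 1) := congrArg Subtype.val hc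
    have h2 : M.mulVec (Pi.single j 1) i = M i j := by
      simp [Matrix.mulVec, dotProduct, Pi.single_apply]
    calc M i j = (M.mulVec (Pi.single j 1)) i := h2.symm
      _ = (c • v) i := (congrFun h1 i).symm
      _ = c * v i := rfl
  choose c hc using key
  exact ⟨v, c, hvne, fun i j => hc j i⟩

theorem exists_real_kronecker_sqrt_iff_trace_pos {m n : ℕ}
    (A : Matrix (Fin m × Fin m) (Fin n × Fin n) ℝ)
    (hsymm : (blockVec A).IsSymm) (hrank : (blockVec A).rank = 1) :
    (∃ B : Matrix (Fin m) (Fin n) ℝ, A = B ⊗ₖ B) ↔ 0 < (blockVec A).trace := by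
  have hM : ∀ i k j l, blockVec A (i, j) (k, l) = A (i, k) (j, l) := fun _ _ _ _ => rfl
  constructor
  · rintro ⟨B, rfl⟩
    have hBval : ∀ p q : Fin m × Fin n, blockVec (B ⊗ₖ B) p q = B p.1 p.2 * B q.1 q.2 :=
      fun p q => rfl
    have hBne : ∃ p : Fin m × Fin n, B p.1 p.2 ≠ 0 := by
      by_contra hall
      push_neg at hall
      have : blockVec (B ⊗ₖ B) = 0 := by
        ext p q
        simp [hBval, hall p]
      rw [this, Matrix.rank_zero] at hrank
      exact one_ne_zero hrank.symm
    obtain ⟨p₀, hp₀⟩ := hBne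
    rw [Matrix.trace]
    refine Finset.sum_pos' (fun p _ => ?_) ⟨p₀, Finset.mem_univ _, ?_⟩
    · rw [Matrix.diag, hBval]
      exact mul_self_nonneg _
    · rw [Matrix.diag, hBval]
      exact mul_self_pos.mpr hp₀
  · intro htr
    obtain ⟨v, c, hvne, hfac⟩ := rank_one_factor _ hrank
    have hsym : ∀ i j, blockVec A j i = blockVec A i j := fun i j => hsymm.apply i j
    obtain ⟨p, hp⟩ := Function.ne_iff.mp hvne
    simp only [Pi.zero_apply] at hp
    obtain ⟨t, ht⟩ : ∃ t : ℝ, t = c p / v p := ⟨_, rfl⟩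
    have hcj : ∀ j, c j = t * v j := by
      intro j
      have h1 : c j * v p = c p * v j := by
        rw [← hfac p j, ← hsym p j, hfac j p]
      rw [ht, div_mul_eq_mul_div, eq_div_iff hp, h1]
    have hMij : ∀ i j, blockVec A i j = t * (v i * v j) := by
      intro i j
      rw [hfac i j, hcj j]; ring
    have hs : 0 < ∑ i, v i ^ 2 := by
      refine Finset.sum_pos' (fun i _ => sq_nonneg _) ⟨p, Finset.mem_univ _, ?_⟩
      positivity
    have htrace : (blockVec A).trace = t * ∑ i, v i ^ 2 := by
      rw [Matrix.trace, Finset.mul_sum]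
      refine Finset.sum_congr rfl fun i _ => ?_
      rw [Matrix.diag, hMij]; ring
    have htpos : 0 < t := by
      rw [htrace] at htr
      by_contra hle
      push_neg at hle
      nlinarith
    refine ⟨Matrix.of fun k l => Real.sqrt t * v (k, l), ?_⟩
    ext ⟨i, k⟩ ⟨j, l⟩
    have : A (i, k) (j, l) = blockVec A (i, j) (k, l) := rfl
    rw [this, hMij]
    simp only [kroneckerMap_apply, Matrix.of_apply]
    have hst : Real.sqrt t * Real.sqrt t = t := Real.mul_self_sqrt htpos.le
    have hst2 : Real.sqrt t ^ 2 = t := by rw [sq]; exact hst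
    linear_combination (-(v (i, j) * v (k, l))) * hst2
end

section
/- Let B be a nonzero n×n matrix over ℂ (or over ℝ). The Kronecker product B ⊗ B is a symmetric matrix (equal to its transpose) if and only if B is symmetric (Bᵀ = B) or skew-symmetric (Bᵀ = -B). -/
open Matrix Kronecker

theorem kronecker_sq_isSymm_iff {𝕜 : Type*} [RCLike 𝕜] {n : ℕ}
    (B : Matrix (Fin n) (Fin n) 𝕜) (hB : B ≠ 0) :
    (B ⊗ₖ B).IsSymm ↔ Bᵀ = B ∨ Bᵀ = -B := by
  constructor
  · intro h
    obtain ⟨p, q, hpq⟩ : ∃ p q, B p q ≠ 0 := by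
      by_contra hc
      push_neg at hc
      exact hB (by ext i j; simpa using hc i j)
    have key : ∀ i j k l, B j i * B l k = B i j * B k l := by
      intro i j k l
      have := congrFun (congrFun h (i, k)) (j, l)
      simpa [Matrix.transpose_apply, Matrix.kroneckerMap_apply] using this
    set c : 𝕜 := B q p / B p q with hc
    have hBc : ∀ k l, B l k = c * B k l := by
      intro k l
      have hk := key q p k l
      rw [hc]
      field_simp
      linear_combination hk
    have hcc : c * c = 1 := by
      have h1 : B q p = c * B p q := hBc p q
      have h2 : B p q = c * B q p := hBc q p
      have key2 : B p q = c * (c * B p q) := by rw [← h1, ← h2]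
      have h3 : (c * c - 1) * B p q = 0 := by linear_combination -key2
      rcases mul_eq_zero.mp h3 with h4 | h4
      · have := sub_eq_zero.mp h4
        linear_combination this
      · exact absurd h4 hpq
    rcases mul_self_eq_one_iff.mp hcc with h1 | h1
    · left
      ext i j
      rw [Matrix.transpose_apply, hBc i j, h1, one_mul]
    · right
      ext i j
      rw [Matrix.transpose_apply, hBc i j, h1]
      simp
  · intro h
    unfold Matrix.IsSymm
    ext ⟨i, k⟩ ⟨j, l⟩
    rcases h with h | h
    · have h1 := congrFun (congrFun h j) i
      have h2 := congrFun (congrFun h l) k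
      simp only [Matrix.transpose_apply] at h1 h2
      simp [Matrix.transpose_apply, Matrix.kroneckerMap_apply, h1, h2]
    · have h1 := congrFun (congrFun h j) i
      have h2 := congrFun (congrFun h l) k
      simp only [Matrix.transpose_apply, Matrix.neg_apply] at h1 h2
      simp only [Matrix.transpose_apply, Matrix.kroneckerMap_apply, h1, h2]
      ring
end

section
/- Let B be a nonzero n×n complex matrix. The Kronecker product B ⊗ B is Hermitian (equal to its conjugate transpose) if and only if B is Hermitian (B* = B) or skew-Hermitian (B* = -B). -/
open Matrix Kronecker

theorem kronecker_sq_isHermitian_iff {n : ℕ}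
    (B : Matrix (Fin n) (Fin n) ℂ) (hB : B ≠ 0) :
    (B ⊗ₖ B).IsHermitian ↔ Bᴴ = B ∨ Bᴴ = -B := by
  constructor
  · intro h
    obtain ⟨a, b, hab⟩ : ∃ a b, B a b ≠ 0 := by
      by_contra hc
      push_neg at hc
      exact hB (Matrix.ext fun i j => hc i j)
    have key : ∀ i j k l, (starRingEnd ℂ) (B j i) * (starRingEnd ℂ) (B l k)
        = B i j * B k l := by
      intro i j k l
      have := congrFun (congrFun h.eq (i, k)) (j, l)
      simpa [Matrix.conjTranspose_apply, Matrix.kroneckerMap_apply] using this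
    have hsq : (starRingEnd ℂ) (B b a) * (starRingEnd ℂ) (B b a) = B a b * B a b :=
      key a b a b
    rcases mul_self_eq_mul_self_iff.mp hsq with he | he
    · left
      ext i j
      have h2 := key i j a b
      rw [he] at h2
      simpa [Matrix.conjTranspose_apply] using mul_right_cancel₀ hab h2
    · right
      ext i j
      have h2 := key i j a b
      rw [he] at h2
      have h3 : (starRingEnd ℂ) (B j i) * B a b = (-(B i j)) * B a b := by
        linear_combination -h2
      simpa [Matrix.conjTranspose_apply, Matrix.neg_apply] using
        mul_right_cancel₀ hab h3
  · rintro (h | h) <;>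
    · ext ⟨i, k⟩ ⟨j, l⟩
      have h1 := congrFun (congrFun h i) j
      have h2 := congrFun (congrFun h k) l
      simp only [Matrix.conjTranspose_apply, Matrix.neg_apply] at h1 h2
      simp only [Matrix.conjTranspose_apply, Matrix.kroneckerMap_apply, star_mul', h1, h2]
      try ring
end

section
/- Let B be an n×n complex matrix. The Kronecker product B ⊗ B is Hermitian positive definite if and only if B is Hermitian and either B is positive definite or -B is positive definite. -/
open Matrix Kronecker
open scoped ComplexOrder

private lemma kron_conjTranspose {m : Type*} [Fintype m] (A B : Matrix m m ℂ) :
    (A ⊗ₖ B)ᴴ = Aᴴ ⊗ₖ Bᴴ := by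
  ext ⟨i, k⟩ ⟨j, l⟩
  simp [conjTranspose_apply, mul_comm]

private lemma kron_quad {n : ℕ} (B : Matrix (Fin n) (Fin n) ℂ) (x y : Fin n → ℂ) :
    star (fun p : Fin n × Fin n => x p.1 * y p.2) ⬝ᵥ (B ⊗ₖ B) *ᵥ (fun p => x p.1 * y p.2)
      = (star x ⬝ᵥ B *ᵥ x) * (star y ⬝ᵥ B *ᵥ y) := by
  rw [mul_comm]
  simp only [dotProduct, mulVec, Fintype.sum_prod_type, kroneckerMap_apply, Pi.star_apply,
    star_mul', Finset.mul_sum, Finset.sum_mul]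
  refine Finset.sum_congr rfl fun i _ => ?_
  rw [Finset.sum_comm]
  refine Finset.sum_congr rfl fun j _ => Finset.sum_congr rfl fun k _ =>
    Finset.sum_congr rfl fun l _ => ?_
  ring

private lemma posDef_ct_mul_self {m : Type*} [Fintype m] [DecidableEq m]
    (A : Matrix m m ℂ) (hA : A.det ≠ 0) : (Aᴴ * A).PosDef := by
  refine posDef_iff_dotProduct_mulVec.mpr ⟨Matrix.isHermitian_conjTranspose_mul_self A, fun x hx => ?_⟩
  rw [← mulVec_mulVec, dotProduct_mulVec, vecMul_conjTranspose, star_star]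
  have hy : A *ᵥ x ≠ 0 := by
    intro h
    apply hx
    have := congrArg (fun v => A⁻¹ *ᵥ v) h
    simpa [mulVec_mulVec, Matrix.nonsing_inv_mul A (Ne.isUnit hA)] using this
  obtain ⟨i, hi⟩ := Function.ne_iff.mp hy
  refine Finset.sum_pos' (fun j _ => star_mul_self_nonneg _) ⟨i, Finset.mem_univ i, ?_⟩
  simp only [Pi.star_apply]
  rw [Complex.star_def, mul_comm, Complex.mul_conj]
  exact_mod_cast Complex.normSq_pos.mpr (by simpa using hi)

private lemma kron_posDef_of_posDef {n : ℕ} {B : Matrix (Fin n) (Fin n) ℂ}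
    (hB : B.PosDef) : (B ⊗ₖ B).PosDef := by
  exact hB.kronecker hB

theorem kronecker_sq_posDef_iff {n : ℕ} (B : Matrix (Fin n) (Fin n) ℂ) :
    (B ⊗ₖ B).PosDef ↔ B.IsHermitian ∧ (B.PosDef ∨ (-B).PosDef) := by
  constructor
  · intro h
    rcases Nat.eq_zero_or_pos n with hn | hn
    · subst hn
      have hherm : B.IsHermitian := by ext i; exact i.elim0
      exact ⟨hherm, Or.inl (posDef_iff_dotProduct_mulVec.mpr ⟨hherm, fun x hx => absurd (funext fun i : Fin 0 => i.elim0) hx⟩)⟩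
    set i₀ : Fin n := ⟨0, hn⟩
    -- products of quadratic forms are positive
    have hq : ∀ x y : Fin n → ℂ, x ≠ 0 → y ≠ 0 →
        0 < (star x ⬝ᵥ B *ᵥ x) * (star y ⬝ᵥ B *ᵥ y) := by
      intro x y hx hy
      rw [← kron_quad]
      refine (posDef_iff_dotProduct_mulVec.mp h).2 ?_
      obtain ⟨i, hi⟩ := Function.ne_iff.mp hx
      obtain ⟨k, hk⟩ := Function.ne_iff.mp hy
      exact Function.ne_iff.mpr ⟨(i, k), by simpa using mul_ne_zero hi hk⟩
    -- entrywise relation from hermitianness of the kronecker square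
    have hrel : ∀ i j k l, star (B j i) * star (B l k) = B i j * B k l := by
      intro i j k l
      have := congrFun (congrFun h.1 (i, k)) (j, l)
      simpa [conjTranspose_apply, kroneckerMap_apply, star_mul', mul_comm] using this
    have hx₀ : (Pi.single i₀ 1 : Fin n → ℂ) ≠ 0 := by
      intro hc
      have := congrFun hc i₀
      simp at this
    have hq0 : (0:ℂ) < B i₀ i₀ * B i₀ i₀ := by
      have := hq _ _ hx₀ hx₀
      simpa [dotProduct, mulVec, Pi.single_apply, Finset.mul_sum] using this
    have ha_ne : B i₀ i₀ ≠ 0 := by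
      intro hc
      rw [hc, mul_zero] at hq0
      exact lt_irrefl _ hq0
    have ha_real : star (B i₀ i₀) = B i₀ i₀ := by
      have h1 : star (B i₀ i₀) * star (B i₀ i₀) = B i₀ i₀ * B i₀ i₀ := hrel i₀ i₀ i₀ i₀
      set a := B i₀ i₀ with ha
      have h2 : star a = a ∨ star a = -a := by
        have h3 : (star a - a) * (star a + a) = 0 := by linear_combination h1
        rcases mul_eq_zero.mp h3 with h | h
        · exact Or.inl (by linear_combination h)
        · exact Or.inr (by linear_combination h)
      rcases h2 with h2 | h2
      · exact h2
      · exfalso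
        have him : a.re = 0 := by
          have := congrArg Complex.re h2
          simp [Complex.star_def] at this
          linarith
        have h4 : (0:ℝ) < (a * a).re := by
          have := (Complex.lt_def.mp hq0).1
          simpa using this
        rw [Complex.mul_re, him] at h4
        nlinarith
    -- B is Hermitian
    have hherm : B.IsHermitian := by
      ext i j
      have h3 := hrel i j i₀ i₀
      rw [ha_real] at h3
      simpa [conjTranspose_apply] using mul_right_cancel₀ ha_ne h3
    -- the quadratic form is real
    have hreal : ∀ x : Fin n → ℂ,
        ((star x ⬝ᵥ B *ᵥ x).re : ℂ) = star x ⬝ᵥ B *ᵥ x := by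
      intro x
      refine Complex.conj_eq_iff_re.mp ?_
      calc (starRingEnd ℂ) (star x ⬝ᵥ B *ᵥ x)
          = star (star x ⬝ᵥ B *ᵥ x) := rfl
        _ = star (B *ᵥ x) ⬝ᵥ x := (star_dotProduct _ _).symm
        _ = (star x ᵥ* Bᴴ) ⬝ᵥ x := by rw [star_mulVec]
        _ = (star x ᵥ* B) ⬝ᵥ x := by rw [hherm.eq]
        _ = star x ⬝ᵥ B *ᵥ x := (dotProduct_mulVec _ _ _).symm
    set x₀ : Fin n → ℂ := Pi.single i₀ 1 with hx₀def
    refine ⟨hherm, ?_⟩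
    have key : ∀ y : Fin n → ℂ, y ≠ 0 →
        0 < (star x₀ ⬝ᵥ B *ᵥ x₀).re * (star y ⬝ᵥ B *ᵥ y).re := by
      intro y hy
      have h5 := hq _ _ hx₀ hy
      rw [← hreal x₀, ← hreal y] at h5
      rw [← Complex.ofReal_mul] at h5
      exact_mod_cast h5
    by_cases hpos : 0 < (star x₀ ⬝ᵥ B *ᵥ x₀).re
    · left
      refine posDef_iff_dotProduct_mulVec.mpr ⟨hherm, fun y hy => ?_⟩
      rw [← hreal y]
      have := key y hy
      have hypos : 0 < (star y ⬝ᵥ B *ᵥ y).re := by nlinarith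
      exact Complex.zero_lt_real.mpr hypos
    · right
      have hneg : (star x₀ ⬝ᵥ B *ᵥ x₀).re < 0 := by
        rcases lt_trichotomy ((star x₀ ⬝ᵥ B *ᵥ x₀).re) 0 with h' | h' | h'
        · exact h'
        · exfalso; have := key x₀ hx₀; rw [h'] at this; simp at this
        · exact absurd h' hpos
      refine posDef_iff_dotProduct_mulVec.mpr ⟨hherm.neg, fun y hy => ?_⟩
      have := key y hy
      have hyneg : (star y ⬝ᵥ B *ᵥ y).re < 0 := by nlinarith
      have : (0:ℂ) < -(star y ⬝ᵥ B *ᵥ y) := by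
        rw [← hreal y, ← Complex.ofReal_neg]
        exact_mod_cast neg_pos.mpr hyneg
      simpa [neg_mulVec, dotProduct_neg] using this
  · rintro ⟨hH, hP | hP⟩
    · exact kron_posDef_of_posDef hP
    · have hBB : B ⊗ₖ B = (-B) ⊗ₖ (-B) := by
        ext ⟨i, k⟩ ⟨j, l⟩
        simp [kroneckerMap_apply]
      rw [hBB]
      exact kron_posDef_of_posDef hP
end

section
/- Let B be an n×n complex matrix. The Kronecker product B ⊗ B is complex orthogonal (i.e., (B ⊗ B)ᵀ * (B ⊗ B) = 1) if and only if Bᵀ * B = 1 or (Complex.I • B)ᵀ * (Complex.I • B) = 1 (equivalently, Bᵀ * B = 1 or Bᵀ * B = -1). -/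
open Matrix Kronecker

lemma kron_self_eq_one_iff {n : ℕ} (M : Matrix (Fin n) (Fin n) ℂ) :
    M ⊗ₖ M = 1 ↔ M = 1 ∨ M = -1 := by
  constructor
  · intro h
    rcases Nat.eq_zero_or_pos n with hn | hn
    · left; subst hn; ext i j; exact i.elim0
    · set i0 : Fin n := ⟨0, hn⟩ with hi0
      have key : ∀ i k j l : Fin n,
          M i j * M k l = if ((i,k) : Fin n × Fin n) = (j,l) then 1 else 0 := by
        intro i k j l
        have := congrFun (congrFun h (i,k)) (j,l)
        simpa [Matrix.kroneckerMap_apply, Matrix.one_apply] using this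
      have hd : M i0 i0 * M i0 i0 = 1 := by simpa using key i0 i0 i0 i0
      have hne : M i0 i0 ≠ 0 := by
        intro h0; rw [h0] at hd; simp at hd
      have hoff : ∀ i j, i ≠ j → M i j = 0 := by
        intro i j hij
        have h2 := key i i0 j i0
        rw [if_neg (by simp [hij])] at h2
        exact (mul_eq_zero.mp h2).resolve_right hne
      have hdiag : ∀ i, M i i = M i0 i0 := by
        intro i
        have h1 : M i i * M i0 i0 = 1 := by simpa using key i i0 i i0
        exact mul_right_cancel₀ hne (h1.trans hd.symm)
      rcases mul_self_eq_one_iff.mp hd with h1 | h1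
      · left
        ext i j
        by_cases hij : i = j
        · subst hij; rw [hdiag, h1]; simp [Matrix.one_apply]
        · rw [hoff i j hij]; simp [Matrix.one_apply, hij]
      · right
        ext i j
        by_cases hij : i = j
        · subst hij; rw [hdiag, h1]; simp [Matrix.one_apply]
        · rw [hoff i j hij]; simp [Matrix.one_apply, hij]
  · rintro (h | h) <;> subst h
    · exact Matrix.one_kronecker_one
    · ext ⟨i, k⟩ ⟨j, l⟩
      simp [Matrix.kroneckerMap_apply, Matrix.one_apply, Prod.ext_iff, ite_and]
      split <;> split <;> simp_all

theorem kronecker_sq_complex_orthogonal_iff {n : ℕ} (B : Matrix (Fin n) (Fin n) ℂ) :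
    (B ⊗ₖ B)ᵀ * (B ⊗ₖ B) = 1 ↔
      Bᵀ * B = 1 ∨ (Complex.I • B)ᵀ * (Complex.I • B) = 1 := by
  have h1 : (B ⊗ₖ B)ᵀ * (B ⊗ₖ B) = (Bᵀ * B) ⊗ₖ (Bᵀ * B) := by
    rw [← Matrix.kroneckerMap_transpose, ← Matrix.mul_kronecker_mul]
  have h2 : (Complex.I • B)ᵀ * (Complex.I • B) = -(Bᵀ * B) := by
    rw [Matrix.transpose_smul, Matrix.smul_mul, Matrix.mul_smul, smul_smul,
      Complex.I_mul_I, neg_one_smul]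
  rw [h1, kron_self_eq_one_iff, h2, neg_eq_iff_eq_neg]
end
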